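/- Let d ≥ 1 and let A ∈ {0,1}^{d×d} be a matrix whose first row is the all-ones vector, and each subsequent row i (2 ≤ i ≤ d) is either of the form (1,…,1,0,…,0) with exactly i−1 leading ones, or of the form (0,…,0,1,…,1) with exactly i−1 leading zeros. Then A is invertible and the spectral norm (operator norm induced by the Euclidean norm) of A⁻¹ satisfies ‖A⁻¹‖ ≤ d. -/

import Mathlib

open Finset

lemma sum_ind_mul {d : ℕ} (k : ℕ) (hk : k < d) (f : Fin d → ℝ) :
    ∑ l : Fin d, (if (l : ℕ) = k then (1:ℝ) else 0) * f l = f ⟨k, hk⟩ := by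
  rw [Fintype.sum_eq_single (⟨k, hk⟩ : Fin d)]
  · simp
  · intro x hx
    have : (x : ℕ) ≠ k := fun h => hx (Fin.ext h)
    simp [this]

lemma sum_ind {d : ℕ} (k : ℕ) :
    ∑ l : Fin d, (if (l : ℕ) = k then (1:ℝ) else 0) = if k < d then 1 else 0 := by
  by_cases hk : k < d
  · rw [if_pos hk, Fintype.sum_eq_single (⟨k, hk⟩ : Fin d)]
    · simp
    · intro x hx
      have : (x : ℕ) ≠ k := fun h => hx (Fin.ext h)
      simp [this]
  · rw [if_neg hk]
    apply Finset.sum_eq_zero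
    intro l _
    have : (l : ℕ) ≠ k := by have := l.isLt; omega
    simp [this]

noncomputable def stv (d : ℕ) (c : ℕ → Bool) (k : ℕ) (j : Fin d) : ℝ :=
  if k = 0 then 0
  else if k = d then (if (j : ℕ) = 0 then 1 else 0)
  else if c k then (if (j : ℕ) = k then 1 else 0)
  else (if (j : ℕ) = 0 then 1 else 0) - (if (j : ℕ) = k then 1 else 0)

noncomputable def stMat (d : ℕ) (c : ℕ → Bool) : Matrix (Fin d) (Fin d) ℝ :=
  Matrix.of fun i j => stv d c ((i : ℕ) + 1) j - stv d c (i : ℕ) j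

lemma stM_sq_le_one {d : ℕ} (c : ℕ → Bool) (i j : Fin d) :
    (stMat d c i j) ^ 2 ≤ 1 := by
  have hi := i.isLt
  have hj := j.isLt
  simp only [stMat, stv, Matrix.of_apply]
  split_ifs <;> first | omega | norm_num

set_option maxHeartbeats 1600000 in
lemma stMat_sq_le {d : ℕ} (c : ℕ → Bool) (i j : Fin d) :
    (stMat d c i j) ^ 2 ≤
      (if (i:ℕ) ≠ 0 then (if (j:ℕ) = (i:ℕ) then (1:ℝ) else 0) else 0)
      + (if (j:ℕ) = 0 then 1 else 0)
      + (if (i:ℕ) + 1 ≠ d then (if (j:ℕ) = (i:ℕ) + 1 then (1:ℝ) else 0) else 0) := by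
  have hi := i.isLt
  have hj := j.isLt
  simp only [stMat, stv, Matrix.of_apply]
  split_ifs <;> first | omega | norm_num

lemma stMat_frob {d : ℕ} (hd : 1 ≤ d) (c : ℕ → Bool) :
    ∑ i : Fin d, ∑ j : Fin d, (stMat d c i j) ^ 2 ≤ (d:ℝ)^2 := by
  have h1 : ∀ i : Fin d, ∑ j : Fin d, (stMat d c i j) ^ 2 ≤
      (if (i:ℕ) ≠ 0 then (1:ℝ) else 0) + 1 + (if (i:ℕ) + 1 ≠ d then (1:ℝ) else 0) := by
    intro i
    have hi := i.isLt
    calc ∑ j : Fin d, (stMat d c i j) ^ 2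
        ≤ ∑ j : Fin d, ((if (i:ℕ) ≠ 0 then (if (j:ℕ) = (i:ℕ) then (1:ℝ) else 0) else 0)
            + (if (j:ℕ) = 0 then 1 else 0)
            + (if (i:ℕ) + 1 ≠ d then (if (j:ℕ) = (i:ℕ) + 1 then (1:ℝ) else 0) else 0)) :=
          Finset.sum_le_sum fun j _ => stMat_sq_le c i j
      _ ≤ _ := by
          rw [Finset.sum_add_distrib, Finset.sum_add_distrib]
          have e1 : ∑ j : Fin d, (if (i:ℕ) ≠ 0 then (if (j:ℕ) = (i:ℕ) then (1:ℝ) else 0) else 0)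
              ≤ (if (i:ℕ) ≠ 0 then (1:ℝ) else 0) := by
            by_cases h : (i:ℕ) ≠ 0
            · simp only [if_pos h]
              rw [sum_ind, if_pos hi]
            · simp [h]
          have e2 : ∑ j : Fin d, (if (j:ℕ) = 0 then (1:ℝ) else 0) = 1 := by
            rw [sum_ind, if_pos (show 0 < d by omega)]
          have e3 : ∑ j : Fin d, (if (i:ℕ) + 1 ≠ d then (if (j:ℕ) = (i:ℕ) + 1 then (1:ℝ) else 0) else 0)
              ≤ (if (i:ℕ) + 1 ≠ d then (1:ℝ) else 0) := by
            by_cases h : (i:ℕ) + 1 ≠ d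
            · have h2 : (i:ℕ) + 1 < d := by omega
              simp only [if_pos h]
              rw [sum_ind, if_pos h2]
            · simp [h]
          rw [e2]
          exact add_le_add (add_le_add e1 le_rfl) e3
  calc ∑ i : Fin d, ∑ j : Fin d, (stMat d c i j) ^ 2
      ≤ ∑ i : Fin d, ((if (i:ℕ) ≠ 0 then (1:ℝ) else 0) + 1 + (if (i:ℕ) + 1 ≠ d then (1:ℝ) else 0)) :=
        Finset.sum_le_sum fun i _ => h1 i
    _ = (d - 1) + d + (d - 1) := by
        rw [Finset.sum_add_distrib, Finset.sum_add_distrib]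
        have g1 : ∑ i : Fin d, (if (i:ℕ) ≠ 0 then (1:ℝ) else 0) = d - 1 := by
          have : ∀ i : Fin d, (if (i:ℕ) ≠ 0 then (1:ℝ) else 0)
              = 1 - (if (i:ℕ) = 0 then (1:ℝ) else 0) := by
            intro i; split_ifs <;> first | omega | norm_num
          rw [Finset.sum_congr rfl fun i _ => this i, Finset.sum_sub_distrib, sum_ind,
            if_pos (show 0 < d by omega)]
          simp
        have g2 : ∑ i : Fin d, (if (i:ℕ) + 1 ≠ d then (1:ℝ) else 0) = d - 1 := by
          have : ∀ i : Fin d, (if (i:ℕ) + 1 ≠ d then (1:ℝ) else 0)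
              = 1 - (if (i:ℕ) = d - 1 then (1:ℝ) else 0) := by
            intro i; have := i.isLt; split_ifs <;> first | omega | norm_num
          rw [Finset.sum_congr rfl fun i _ => this i, Finset.sum_sub_distrib, sum_ind,
            if_pos (show d - 1 < d by omega)]
          simp
        rw [g1, g2]; simp
    _ ≤ (d:ℝ)^2 := by
        rcases Nat.lt_or_ge d 2 with h | h
        · interval_cases d <;> norm_num
        · have : (2:ℝ) ≤ d := by exact_mod_cast h
          nlinarith

lemma stv_mul {d : ℕ} (hd : 1 ≤ d) (c : ℕ → Bool) (A : Matrix (Fin d) (Fin d) ℝ)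
    (hfirst : ∀ j, A ⟨0, hd⟩ j = 1)
    (hA : ∀ (k : ℕ) (hk : k < d), k ≠ 0 →
      if c k then (∀ j, A ⟨k, hk⟩ j = if (j:ℕ) < k then 1 else 0)
      else (∀ j, A ⟨k, hk⟩ j = if (j:ℕ) < k then 0 else 1))
    (k : ℕ) (hk : k ≤ d) (j : Fin d) :
    ∑ l : Fin d, stv d c k l * A l j = if (j:ℕ) < k then 1 else 0 := by
  by_cases hk0 : k = 0
  · subst hk0; simp [stv]
  by_cases hkd : k = d
  · have hv : ∀ l : Fin d, stv d c k l = (if (l:ℕ) = 0 then (1:ℝ) else 0) := by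
      intro l; unfold stv; rw [if_neg hk0, if_pos hkd]
    rw [Finset.sum_congr rfl fun l _ => by rw [hv l], sum_ind_mul 0 (by omega) (fun l => A l j)]
    rw [hfirst j, if_pos (show (j:ℕ) < k by omega)]
  · have hk' : k < d := by omega
    have h := hA k hk' hk0
    by_cases hc : c k = true
    · rw [if_pos hc] at h
      have hv : ∀ l : Fin d, stv d c k l = (if (l:ℕ) = k then (1:ℝ) else 0) := by
        intro l; unfold stv; rw [if_neg hk0, if_neg hkd, if_pos hc]
      rw [Finset.sum_congr rfl fun l _ => by rw [hv l],
        sum_ind_mul k hk' (fun l => A l j), h j]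
    · rw [if_neg hc] at h
      have hv : ∀ l : Fin d, stv d c k l
          = (if (l:ℕ) = 0 then (1:ℝ) else 0) - (if (l:ℕ) = k then 1 else 0) := by
        intro l; unfold stv; rw [if_neg hk0, if_neg hkd, if_neg hc]
      rw [Finset.sum_congr rfl fun l _ => by rw [hv l]]
      simp only [sub_mul, Finset.sum_sub_distrib]
      rw [sum_ind_mul 0 (by omega) (fun l => A l j), sum_ind_mul k hk' (fun l => A l j),
        hfirst j, h j]
      split_ifs <;> norm_num

lemma stMat_mul {d : ℕ} (hd : 1 ≤ d) (c : ℕ → Bool) (A : Matrix (Fin d) (Fin d) ℝ)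
    (hfirst : ∀ j, A ⟨0, hd⟩ j = 1)
    (hA : ∀ (k : ℕ) (hk : k < d), k ≠ 0 →
      if c k then (∀ j, A ⟨k, hk⟩ j = if (j:ℕ) < k then 1 else 0)
      else (∀ j, A ⟨k, hk⟩ j = if (j:ℕ) < k then 0 else 1)) :
    stMat d c * A = 1 := by
  ext i j
  rw [Matrix.mul_apply]
  have h1 := stv_mul hd c A hfirst hA ((i:ℕ)+1) (by have := i.isLt; omega) j
  have h0 := stv_mul hd c A hfirst hA (i:ℕ) (le_of_lt i.isLt) j
  simp only [stMat, Matrix.of_apply, sub_mul, Finset.sum_sub_distrib]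
  rw [h1, h0]
  rcases eq_or_ne i j with rfl | hne
  · rw [Matrix.one_apply_eq]
    rw [if_pos (by omega), if_neg (by omega)]
    norm_num
  · rw [Matrix.one_apply_ne hne]
    have : (i:ℕ) ≠ (j:ℕ) := fun h => hne (Fin.ext h)
    split_ifs <;> first | omega | norm_num

/-- If `A` is a `d × d` `{0,1}`-matrix (`d ≥ 1`) whose first row is all ones
and whose row `i` (for `i ≥ 2`, i.e. index `i ≠ 0`) is either `(1,…,1,0,…,0)` with `i - 1`
leading ones or `(0,…,0,1,…,1)` with `i - 1` leading zeros, then `A` is invertible and the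
spectral norm of `A⁻¹` is at most `d`. -/
theorem stmt10 {d : ℕ} (hd : 1 ≤ d) (A : Matrix (Fin d) (Fin d) ℝ)
    (hfirst : ∀ j, A ⟨0, hd⟩ j = 1)
    (hrow : ∀ i : Fin d, (i : ℕ) ≠ 0 →
      (∀ j, A i j = if (j : ℕ) < (i : ℕ) then 1 else 0) ∨
      (∀ j, A i j = if (j : ℕ) < (i : ℕ) then 0 else 1)) :
    IsUnit A ∧ ‖(Matrix.toEuclideanCLM (𝕜 := ℝ) (n := Fin d)) A⁻¹‖ ≤ d := by
  classical
  set c : ℕ → Bool := fun k =>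
    if (∀ (hk : k < d), ∀ j, A ⟨k, hk⟩ j = if (j:ℕ) < k then 1 else 0) then true else false
    with hc
  have hA : ∀ (k : ℕ) (hk : k < d), k ≠ 0 →
      if c k then (∀ j, A ⟨k, hk⟩ j = if (j:ℕ) < k then 1 else 0)
      else (∀ j, A ⟨k, hk⟩ j = if (j:ℕ) < k then 0 else 1) := by
    intro k hk hk0
    by_cases h : (∀ (hk : k < d), ∀ j, A ⟨k, hk⟩ j = if (j:ℕ) < k then 1 else 0)
    · have hck : c k = true := by rw [hc]; simp only [if_pos h]
      rw [if_pos hck]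
      exact h hk
    · have hck : c k = false := by rw [hc]; simp only [if_neg h]
      rw [if_neg (by rw [hck]; simp)]
      rcases hrow ⟨k, hk⟩ hk0 with hA' | hB
      · exact absurd (fun _ => hA') h
      · exact hB
  have hMA : stMat d c * A = 1 := stMat_mul hd c A hfirst hA
  have hinv : A⁻¹ = stMat d c := Matrix.inv_eq_left_inv hMA
  have : Invertible A := invertibleOfLeftInverse A _ hMA
  refine ⟨isUnit_of_invertible A, ?_⟩
  rw [hinv]
  apply ContinuousLinearMap.opNorm_le_bound _ (by positivity)
  intro y
  set x : EuclideanSpace ℝ (Fin d) := (Matrix.toEuclideanCLM (𝕜 := ℝ) (n := Fin d)) (stMat d c) y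
    with hxdef
  have hxi : ∀ i, x i = ∑ l, stMat d c i l * y l := fun i => rfl
  have key : ∑ i : Fin d, (x i)^2 ≤ (d:ℝ)^2 * ∑ j : Fin d, (y j)^2 := by
    calc ∑ i : Fin d, (x i)^2
        ≤ ∑ i : Fin d, ((∑ l : Fin d, (stMat d c i l)^2) * ∑ j : Fin d, (y j)^2) := by
          apply Finset.sum_le_sum
          intro i _
          rw [hxi i]
          exact Finset.sum_mul_sq_le_sq_mul_sq _ _ _
      _ = (∑ i : Fin d, ∑ l : Fin d, (stMat d c i l)^2) * ∑ j : Fin d, (y j)^2 := by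
          rw [Finset.sum_mul]
      _ ≤ (d:ℝ)^2 * ∑ j : Fin d, (y j)^2 :=
          mul_le_mul_of_nonneg_right (stMat_frob hd c) (by positivity)
  have hxn : ‖x‖ = Real.sqrt (∑ i : Fin d, (x i)^2) := by
    rw [EuclideanSpace.norm_eq]
    simp [Real.norm_eq_abs, sq_abs]
  have hyn : ‖y‖ = Real.sqrt (∑ j : Fin d, (y j)^2) := by
    rw [EuclideanSpace.norm_eq]
    simp [Real.norm_eq_abs, sq_abs]
  rw [hxn, hyn]
  calc Real.sqrt (∑ i : Fin d, (x i)^2) ≤ Real.sqrt ((d:ℝ)^2 * ∑ j : Fin d, (y j)^2) :=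
        Real.sqrt_le_sqrt key
    _ = (d:ℝ) * Real.sqrt (∑ j : Fin d, (y j)^2) := by
        rw [Real.sqrt_mul (by positivity), Real.sqrt_sq (by positivity)]
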